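/- Let G = (V,E) be a finite simple graph, k ≥ 1 an integer, and u, v two adjacent large-dense vertices of G with N(u) ∪ {u} = N(v) ∪ {v}. Then every feasible solution X for (G,k) of minimum cardinality among all feasible solutions satisfies either {u,v} ⊆ X or {u,v} ∩ X = ∅. -/

import Mathlib

open SimpleGraph

/-- The number of edges of `G` with both endpoints in the neighborhood of `v`. -/
noncomputable def rho {V : Type*} (G : SimpleGraph V) (v : V) : ℕ :=
  {e : Sym2 V | e ∈ G.edgeSet ∧ ∀ x ∈ e, G.Adj v x}.ncard

/-- `v` is large-sparse: `|N(v)| > 7k` and `ρ(v) ≤ |N(v)|(|N(v)|−1)/4`. -/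
def LargeSparse {V : Type*} (G : SimpleGraph V) (k : ℕ) (v : V) : Prop :=
  7 * k < (G.neighborSet v).ncard ∧
    4 * rho G v ≤ (G.neighborSet v).ncard * ((G.neighborSet v).ncard - 1)

/-- `v` is large-dense: `|N(v)| > 7k` and `ρ(v) > |N(v)|(|N(v)|−1)/4`. -/
def LargeDense {V : Type*} (G : SimpleGraph V) (k : ℕ) (v : V) : Prop :=
  7 * k < (G.neighborSet v).ncard ∧
    (G.neighborSet v).ncard * ((G.neighborSet v).ncard - 1) < 4 * rho G v

/-- The connected component `c` of `H` is a clique. -/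
def CompIsClique {W : Type*} (H : SimpleGraph W) (c : H.ConnectedComponent) : Prop :=
  H.IsClique c.supp

/-- The connected component `c` of `H` is a tree. -/
def CompIsTree {W : Type*} (H : SimpleGraph W) (c : H.ConnectedComponent) : Prop :=
  (H.induce c.supp).IsTree

/-- Every connected component of `H` is a clique or a tree. -/
def CliquesOrTrees {W : Type*} (H : SimpleGraph W) : Prop :=
  ∀ c : H.ConnectedComponent, CompIsClique H c ∨ CompIsTree H c

/-- `X` is a feasible solution for `(G, k)`: `|X| ≤ k` and every connected component of
`G − X` is a clique or a tree. -/
def IsFeasible {V : Type*} (G : SimpleGraph V) (k : ℕ) (X : Set V) : Prop :=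
  X.ncard ≤ k ∧ CliquesOrTrees (G.induce (Xᶜ : Set V))

lemma exists_good_edge {V : Type*} [Fintype V] (G : SimpleGraph V) (k : ℕ)
    (v : V) (hdense : (G.neighborSet v).ncard * ((G.neighborSet v).ncard - 1) < 4 * rho G v)
    (hlarge : 7 * k < (G.neighborSet v).ncard)
    (X : Set V) (hXk : X.ncard ≤ k) :
    ∃ a b : V, G.Adj a b ∧ G.Adj v a ∧ G.Adj v b ∧ a ∉ X ∧ b ∉ X := by
  classical
  by_contra hcon
  push_neg at hcon
  set N := G.neighborSet v with hN
  set T : Set (Sym2 V) := {e : Sym2 V | e ∈ G.edgeSet ∧ ∀ x ∈ e, G.Adj v x} with hT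
  -- every edge of T has an endpoint in X
  have hsub : T ⊆ (fun p : V × V => Sym2.mk p.1 p.2) '' ((X ∩ N) ×ˢ N) := by
    intro e he
    induction e using Sym2.ind with
    | _ a b =>
      have hab : G.Adj a b := he.1
      have hva : G.Adj v a := he.2 a (by simp)
      have hvb : G.Adj v b := he.2 b (by simp)
      have : a ∈ X ∨ b ∈ X := by
        by_contra h; push_neg at h
        exact h.2 (hcon a b hab hva hvb h.1)
      rcases this with h | h
      · exact ⟨(a, b), ⟨⟨h, hva⟩, hvb⟩, rfl⟩
      · exact ⟨(b, a), ⟨⟨h, hvb⟩, hva⟩, Sym2.eq_swap⟩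
  have hfin : ((X ∩ N) ×ˢ N).Finite := Set.toFinite _
  have h1 : T.ncard ≤ ((X ∩ N) ×ˢ N).ncard :=
    le_trans (Set.ncard_le_ncard hsub ((Set.toFinite _).image _))
      (Set.ncard_image_le hfin)
  have h2 : ((X ∩ N) ×ˢ N).ncard = (X ∩ N).ncard * N.ncard := by
    rw [Set.ncard_eq_toFinset_card', Set.ncard_eq_toFinset_card', Set.ncard_eq_toFinset_card']
    simp [Set.toFinset_prod, Finset.card_product]
  have h3 : (X ∩ N).ncard ≤ k :=
    le_trans (Set.ncard_le_ncard Set.inter_subset_left (Set.toFinite _)) hXk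
  have hub : rho G v ≤ k * N.ncard := by
    calc rho G v = T.ncard := rfl
      _ ≤ (X ∩ N).ncard * N.ncard := h2 ▸ h1
      _ ≤ k * N.ncard := Nat.mul_le_mul_right _ h3
  have hge : 7 * k ≤ N.ncard - 1 := by omega
  have : N.ncard * (N.ncard - 1) ≥ N.ncard * (7 * k) := Nat.mul_le_mul_left _ hge
  have h4 : 4 * rho G v ≤ 4 * (k * N.ncard) := Nat.mul_le_mul_left _ hub
  nlinarith [hdense, this, h4]

noncomputable def induceInduceIso {V : Type*} (G : SimpleGraph V) (s : Set V) (t : Set ↥s) :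
    (G.induce s).induce t ≃g G.induce (Subtype.val '' t) where
  toEquiv := Equiv.Set.image Subtype.val t Subtype.val_injective
  map_rel_iff' := by
    intro a b
    simp [Equiv.Set.image, comap_adj, Equiv.Set.imageOfInjOn]

lemma iso_isAcyclic {A : Type*} {B : Type*} {GA : SimpleGraph A} {GB : SimpleGraph B}
    (e : GA ≃g GB) (h : GA.IsAcyclic) : GB.IsAcyclic := by
  intro v c hc
  exact h (c.map e.symm.toHom) (hc.map e.symm.toEquiv.injective)

lemma iso_isTree {A : Type*} {B : Type*} {GA : SimpleGraph A} {GB : SimpleGraph B}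
    (e : GA ≃g GB) (h : GA.IsTree) : GB.IsTree :=
  ⟨e.connected_iff.mp h.isConnected, iso_isAcyclic e h.IsAcyclic⟩

lemma no_triangle_of_acyclic {A : Type*} {H : SimpleGraph A} (h : H.IsAcyclic)
    {a b c : A} (hab : H.Adj a b) (hbc : H.Adj b c) (hca : H.Adj c a) : False := by
  have hcycle : (Walk.cons hab (Walk.cons hbc (Walk.cons hca Walk.nil))).IsCycle := by
    have h1 : a ≠ b := hab.ne
    have h2 : b ≠ c := hbc.ne
    have h3 : c ≠ a := hca.ne
    rw [Walk.isCycle_def]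
    refine ⟨⟨?_⟩, by simp, ?_⟩
    · simp only [Walk.edges_cons, Walk.edges_nil, List.nodup_cons, List.mem_cons,
        List.not_mem_nil, List.mem_singleton, or_false, List.nodup_nil, and_true]
      simp only [Sym2.eq_iff]
      push_neg
      tauto
    · simp only [Walk.support_cons, Walk.support_nil, List.tail_cons, List.nodup_cons,
        List.mem_cons, List.not_mem_nil, List.mem_singleton, or_false, List.nodup_nil, and_true]
      push_neg
      refine ⟨⟨h2, fun hba => h1 hba.symm⟩, h3.symm.symm, trivial⟩
  exact h _ hcycle

lemma aux_main {V : Type*} [Fintype V] (G : SimpleGraph V) (k : ℕ) (hk : 1 ≤ k)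
    (u v : V) (hv : LargeDense G k v) (huv : G.Adj u v)
    (hnbhd : G.neighborSet u ∪ {u} = G.neighborSet v ∪ {v})
    (X : Set V) (hX : IsFeasible G k X)
    (hmin : ∀ Y : Set V, IsFeasible G k Y → X.ncard ≤ Y.ncard)
    (hu_in : u ∈ X) (hv_out : v ∉ X) : False := by
  classical
  obtain ⟨a, b, hab, hva, hvb, haX, hbX⟩ :=
    exists_good_edge G k v hv.2 hv.1 X hX.1
  set H := G.induce (Xᶜ : Set V) with hH
  have hvX : v ∈ (Xᶜ : Set V) := hv_out
  have haX' : a ∈ (Xᶜ : Set V) := haX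
  have hbX' : b ∈ (Xᶜ : Set V) := hbX
  set vx : ↥(Xᶜ : Set V) := ⟨v, hvX⟩ with hvx
  set cv := H.connectedComponentMk vx with hcv
  -- neighbors of u are neighbors of v or v itself
  have hNu : ∀ w : V, G.Adj u w → w ≠ v → G.Adj v w := by
    intro w hw hne
    have : w ∈ G.neighborSet u ∪ {u} := Or.inl hw
    rw [hnbhd] at this
    rcases this with h | h
    · exact h
    · exact absurd h hne
  have hNv : ∀ w : V, G.Adj v w → w ≠ u → G.Adj u w := by
    intro w hw hne
    have : w ∈ G.neighborSet v ∪ {v} := Or.inl hw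
    rw [← hnbhd] at this
    rcases this with h | h
    · exact h
    · exact (hne h).elim
  -- v's component is a clique
  have hax : H.Adj vx ⟨a, haX'⟩ := hva
  have hbx : H.Adj vx ⟨b, hbX'⟩ := hvb
  have habx : H.Adj ⟨a, haX'⟩ ⟨b, hbX'⟩ := hab
  have hvmem : vx ∈ cv.supp := by rw [ConnectedComponent.mem_supp_iff]
  have hamem : (⟨a, haX'⟩ : ↥(Xᶜ : Set V)) ∈ cv.supp := by
    rw [ConnectedComponent.mem_supp_iff]
    exact ConnectedComponent.sound hax.reachable.symm
  have hbmem : (⟨b, hbX'⟩ : ↥(Xᶜ : Set V)) ∈ cv.supp := by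
    rw [ConnectedComponent.mem_supp_iff]
    exact ConnectedComponent.sound hbx.reachable.symm
  have hclique : H.IsClique cv.supp := by
    rcases hX.2 cv with h | h
    · exact h
    · exfalso
      have adj1 : (H.induce cv.supp).Adj ⟨vx, hvmem⟩ ⟨⟨a, haX'⟩, hamem⟩ := hax
      have adj2 : (H.induce cv.supp).Adj ⟨⟨a, haX'⟩, hamem⟩ ⟨⟨b, hbX'⟩, hbmem⟩ := habx
      have adj3 : (H.induce cv.supp).Adj ⟨⟨b, hbX'⟩, hbmem⟩ ⟨vx, hvmem⟩ := hbx.symm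
      exact no_triangle_of_acyclic h.IsAcyclic adj1 adj2 adj3
  -- the modified solution
  set Y := X \ {u} with hY
  have hYc : (Yᶜ : Set V) = Xᶜ ∪ {u} := by rw [hY, Set.diff_eq, Set.compl_inter, compl_compl]
  have hXY : (Xᶜ : Set V) ⊆ (Yᶜ : Set V) := by rw [hYc]; exact Set.subset_union_left
  have huY : u ∈ (Yᶜ : Set V) := by rw [hYc]; exact Or.inr rfl
  set H' := G.induce (Yᶜ : Set V) with hH'
  set ux : ↥(Yᶜ : Set V) := ⟨u, huY⟩ with hux
  have hmemXc : ∀ x : ↥(Yᶜ : Set V), (x : V) ≠ u → (x : V) ∈ (Xᶜ : Set V) := by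
    intro x hne
    have h2 : (x : V) ∈ Xᶜ ∪ {u} := Set.ext_iff.mp hYc ↑x |>.mp x.2
    rcases h2 with h | h
    · exact h
    · exact (hne h).elim
  have hlift : ∀ {p q : ↥(Xᶜ : Set V)} (w : H.Walk p q),
      H'.Reachable ⟨↑p, hXY p.2⟩ ⟨↑q, hXY q.2⟩ := by
    intro p q w
    induction w with
    | nil => exact Reachable.refl _
    | @cons a c d h w' ih =>
      have hadj : H'.Adj ⟨↑a, hXY a.2⟩ ⟨↑c, hXY c.2⟩ := (h : G.Adj ↑a ↑c)
      exact hadj.reachable.trans ih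
  have L1 : ∀ {x y : ↥(Yᶜ : Set V)} (p : H'.Walk x y),
      ((y : V) = u ∨ ∃ hy : (y : V) ∈ (Xᶜ : Set V), H.Reachable vx ⟨y, hy⟩) →
      ((x : V) = u ∨ ∃ hx : (x : V) ∈ (Xᶜ : Set V), H.Reachable vx ⟨x, hx⟩) := by
    intro x y p
    induction p with
    | nil => exact id
    | @cons x z y h p ih =>
      intro hy
      have hz := ih hy
      by_cases hxu : (x : V) = u
      · exact Or.inl hxu
      · have hxX : (x : V) ∈ (Xᶜ : Set V) := hmemXc x hxu
        right
        rcases hz with hzu | ⟨hzX, hreach⟩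
        · have hadj : G.Adj u ↑x := by
            have hGxz : G.Adj ↑x ↑z := h
            rw [hzu] at hGxz
            exact hGxz.symm
          by_cases hxv : (x : V) = v
          · refine ⟨hxX, ?_⟩
            rw [show (⟨↑x, hxX⟩ : ↥(Xᶜ : Set V)) = vx from Subtype.ext hxv]
          · have hGvx : G.Adj v ↑x := hNu ↑x hadj hxv
            exact ⟨hxX, (Adj.reachable (hGvx : H.Adj vx ⟨↑x, hxX⟩))⟩
        · have hHxz : H.Adj ⟨↑x, hxX⟩ ⟨↑z, hzX⟩ := (h : G.Adj ↑x ↑z)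
          exact ⟨hxX, hreach.trans hHxz.reachable.symm⟩
  have L2 : ∀ {x y : ↥(Yᶜ : Set V)} (p : H'.Walk x y), ¬ H'.Reachable x ux →
      ∃ (hx : (x : V) ∈ (Xᶜ : Set V)) (hy : (y : V) ∈ (Xᶜ : Set V)),
        H.Reachable ⟨x, hx⟩ ⟨y, hy⟩ := by
    intro x y p
    induction p with
    | @nil w =>
      intro hnr
      have hwu : (w : V) ≠ u := fun h => hnr (by rw [show w = ux from Subtype.ext h])
      exact ⟨hmemXc w hwu, hmemXc w hwu, Reachable.refl _⟩
    | @cons x' z' y' h p ih =>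
      intro hnr
      have hxu : (x' : V) ≠ u := fun he => hnr (by rw [show x' = ux from Subtype.ext he])
      have hznr : ¬ H'.Reachable z' ux := fun hr => hnr ((Adj.reachable h).trans hr)
      obtain ⟨hzX, hyX, hr⟩ := ih hznr
      have hxX := hmemXc x' hxu
      have hHxz : H.Adj ⟨↑x', hxX⟩ ⟨↑z', hzX⟩ := (h : G.Adj ↑x' ↑z')
      exact ⟨hxX, hyX, hHxz.reachable.trans hr⟩
  have hfeas : IsFeasible G k Y := by
    constructor
    · exact le_trans (Set.ncard_le_ncard Set.diff_subset (Set.toFinite _)) hX.1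
    · intro c'
      by_cases hcase : ux ∈ c'.supp
      · left
        have hru : ∀ {w : ↥(Yᶜ : Set V)}, w ∈ c'.supp →
            ((w : V) = u ∨ ∃ hw : (w : V) ∈ (Xᶜ : Set V), H.Reachable vx ⟨w, hw⟩) := by
          intro w hw
          rw [ConnectedComponent.mem_supp_iff] at hw hcase
          have hr : H'.Reachable w ux := ConnectedComponent.exact (hw.trans hcase.symm)
          obtain ⟨p⟩ := hr
          exact L1 p (Or.inl rfl)
        have hKadj : ∀ (w : V) (hwX : w ∈ (Xᶜ : Set V)),
            H.Reachable vx ⟨w, hwX⟩ → w ≠ v → G.Adj v w := by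
          intro w hwX hr hwv
          have hwm : (⟨w, hwX⟩ : ↥(Xᶜ : Set V)) ∈ cv.supp := by
            rw [ConnectedComponent.mem_supp_iff]
            exact ConnectedComponent.sound hr.symm
          exact hclique hvmem hwm (fun hh => hwv (congrArg Subtype.val hh).symm)
        intro x hx y hy hne
        have hxp := hru hx
        have hyp := hru hy
        have hneval : (x : V) ≠ (y : V) := fun h => hne (Subtype.ext h)
        show H'.Adj x y
        show G.Adj ↑x ↑y
        rcases hxp with hxu | ⟨hxX, hrx⟩
        · rcases hyp with hyu | ⟨hyX, hry⟩
          · exact absurd (hxu.trans hyu.symm) hneval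
          · rw [hxu]
            by_cases hyv : (y : V) = v
            · rw [hyv]; exact huv
            · have hyne : (y : V) ≠ u := fun hh => hyX (by rw [hh]; exact hu_in)
              exact hNv ↑y (hKadj ↑y hyX hry hyv) hyne
        · rcases hyp with hyu | ⟨hyX, hry⟩
          · rw [hyu]
            refine Adj.symm ?_
            by_cases hxv : (x : V) = v
            · rw [hxv]; exact huv
            · have hxne : (x : V) ≠ u := fun hh => hxX (by rw [hh]; exact hu_in)
              exact hNv ↑x (hKadj ↑x hxX hrx hxv) hxne
          · have hxm : (⟨↑x, hxX⟩ : ↥(Xᶜ : Set V)) ∈ cv.supp := by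
              rw [ConnectedComponent.mem_supp_iff]
              exact ConnectedComponent.sound hrx.symm
            have hym : (⟨↑y, hyX⟩ : ↥(Xᶜ : Set V)) ∈ cv.supp := by
              rw [ConnectedComponent.mem_supp_iff]
              exact ConnectedComponent.sound hry.symm
            exact hclique hxm hym
              (fun hh => hneval (congrArg (Subtype.val : ↥(Xᶜ : Set V) → V) hh))
      · obtain ⟨x₀, hx₀c⟩ := c'.exists_rep
        have hnr : ¬ H'.Reachable x₀ ux := by
          intro hr
          apply hcase
          rw [ConnectedComponent.mem_supp_iff, ← hx₀c]
          exact ConnectedComponent.sound hr.symm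
        have hx₀u : (x₀ : V) ≠ u := fun h => hnr (by rw [show x₀ = ux from Subtype.ext h])
        have hx₀X : (x₀ : V) ∈ (Xᶜ : Set V) := hmemXc x₀ hx₀u
        set c : H.ConnectedComponent := H.connectedComponentMk ⟨↑x₀, hx₀X⟩ with hc
        have hsupp : Subtype.val '' c'.supp = Subtype.val '' c.supp := by
          ext w
          constructor
          · rintro ⟨y, hy, rfl⟩
            rw [ConnectedComponent.mem_supp_iff] at hy
            have hr : H'.Reachable x₀ y := ConnectedComponent.exact (hx₀c.trans hy.symm)
            obtain ⟨p⟩ := hr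
            obtain ⟨hx', hy', hrH⟩ := L2 p hnr
            refine ⟨⟨↑y, hy'⟩, ?_, rfl⟩
            rw [ConnectedComponent.mem_supp_iff, hc]
            exact ConnectedComponent.sound hrH.symm
          · rintro ⟨z, hz, rfl⟩
            rw [ConnectedComponent.mem_supp_iff, hc] at hz
            have hrH : H.Reachable ⟨↑x₀, hx₀X⟩ z := ConnectedComponent.exact hz.symm
            obtain ⟨wlk⟩ := hrH
            have hr' := hlift wlk
            refine ⟨⟨↑z, hXY z.2⟩, ?_, rfl⟩
            rw [ConnectedComponent.mem_supp_iff, ← hx₀c]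
            refine ConnectedComponent.sound ?_
            refine Reachable.symm ?_
            have hxeq : (⟨(⟨↑x₀, hx₀X⟩ : ↥(Xᶜ : Set V)), hXY hx₀X⟩ : ↥(Yᶜ : Set V)) = x₀ :=
              Subtype.ext rfl
            rw [← hxeq]
            exact hr'
        rcases hX.2 c with hcl | htr
        · left
          intro x hx y hy hne
          have hxm : (↑x : V) ∈ Subtype.val '' c.supp := hsupp ▸ ⟨x, hx, rfl⟩
          have hym : (↑y : V) ∈ Subtype.val '' c.supp := hsupp ▸ ⟨y, hy, rfl⟩
          obtain ⟨x', hx', hxe⟩ := hxm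
          obtain ⟨y', hy', hye⟩ := hym
          have hne' : x' ≠ y' := by
            intro hh
            apply hne
            refine Subtype.ext ?_
            rw [← hxe, ← hye, hh]
          have hadjH : H.Adj x' y' := hcl hx' hy' hne'
          show H'.Adj x y
          show G.Adj ↑x ↑y
          have hadjG : G.Adj ↑x' ↑y' := hadjH
          rwa [hxe, hye] at hadjG
        · right
          have t1 : (G.induce (Subtype.val '' c.supp)).IsTree :=
            iso_isTree (induceInduceIso G _ _) htr
          rw [← hsupp] at t1
          exact iso_isTree (induceInduceIso G _ _).symm t1
  have hlt : Y.ncard < X.ncard := Set.ncard_diff_singleton_lt_of_mem hu_in (Set.toFinite _)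
  exact absurd (hmin Y hfeas) (Nat.not_le.mpr hlt)

/-- if `u` and `v` are adjacent large-dense vertices with the same closed
neighborhood, then every minimum-cardinality feasible solution `X` for `(G,k)` contains
either both or neither of them. -/
theorem stmt_12 {V : Type*} [Fintype V] (G : SimpleGraph V) (k : ℕ) (hk : 1 ≤ k)
    (u v : V) (hu : LargeDense G k u) (hv : LargeDense G k v) (huv : G.Adj u v)
    (hnbhd : G.neighborSet u ∪ {u} = G.neighborSet v ∪ {v})
    (X : Set V) (hX : IsFeasible G k X)
    (hmin : ∀ Y : Set V, IsFeasible G k Y → X.ncard ≤ Y.ncard) :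
    ({u, v} : Set V) ⊆ X ∨ ({u, v} : Set V) ∩ X = ∅ := by
  by_cases hu' : u ∈ X <;> by_cases hv' : v ∈ X
  · left
    rintro w (rfl | rfl)
    · exact hu'
    · exact hv'
  · exact (aux_main G k hk u v hv huv hnbhd X hX hmin hu' hv').elim
  · exact (aux_main G k hk v u hu huv.symm hnbhd.symm X hX hmin hv' hu').elim
  · right
    rw [Set.eq_empty_iff_forall_notMem]
    rintro w ⟨(rfl | rfl), hw⟩
    · exact hu' hw
    · exact hv' hw
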